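/- For every (x₁,x₂) ∈ ℝ² satisfying x₁ + x₂ ≥ 1, x₁² + x₂² ≥ 1, 9x₁² + x₂² ≥ 9, x₂ ≤ x₁², x₁ ≤ x₂², and −50 ≤ x₁ ≤ 50, −50 ≤ x₂ ≤ 50, one has x₁² + x₂² ≥ 2; moreover equality x₁² + x₂² = 2 holds for a feasible point if and only if (x₁,x₂) = (1,1). Hence the constrained minimum of x₁² + x₂² over this feasible set equals 2 and is attained uniquely at (1,1). -/
import Mathlib

lemma aux4 (x₁ x₂ : ℝ) (h1 : 1 ≤ x₁ + x₂) (h4 : x₂ ≤ x₁ ^ 2) (h5 : x₁ ≤ x₂ ^ 2) :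
    (1 ≤ x₁ ∧ 1 ≤ x₂) ∨ 5 ≤ x₁ ^ 2 + x₂ ^ 2 := by
  rcases le_or_gt x₂ 0 with h | h
  · right
    have hx1 : 2 ≤ x₁ := by nlinarith
    nlinarith
  rcases le_or_gt x₁ 0 with h' | h'
  · right
    have hx2 : 2 ≤ x₂ := by nlinarith
    nlinarith
  · left
    have e1 : 1 ≤ x₁ := by nlinarith [sq_nonneg x₂, mul_pos h' h', sq_nonneg (x₁ - 1), sq_nonneg (x₁ + 1), mul_pos (mul_pos h' h') h']
    have e2 : 1 ≤ x₂ := by nlinarith [mul_pos h h, sq_nonneg (x₂ - 1), sq_nonneg (x₂ + 1), mul_pos (mul_pos h h) h]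
    exact ⟨e1, e2⟩

/-- For every `(x₁,x₂) ∈ ℝ²` satisfying the Example 4 constraints
`x₁ + x₂ ≥ 1`, `x₁² + x₂² ≥ 1`, `9x₁² + x₂² ≥ 9`, `x₂ ≤ x₁²`, `x₁ ≤ x₂²`,
`−50 ≤ x₁ ≤ 50`, `−50 ≤ x₂ ≤ 50`, one has `x₁² + x₂² ≥ 2`, with equality for a feasible
point iff `(x₁,x₂) = (1,1)`. -/
theorem example4_constrained_min :
    (∀ x₁ x₂ : ℝ, 1 ≤ x₁ + x₂ → 1 ≤ x₁ ^ 2 + x₂ ^ 2 → 9 ≤ 9 * x₁ ^ 2 + x₂ ^ 2 →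
      x₂ ≤ x₁ ^ 2 → x₁ ≤ x₂ ^ 2 → -50 ≤ x₁ → x₁ ≤ 50 → -50 ≤ x₂ → x₂ ≤ 50 →
      2 ≤ x₁ ^ 2 + x₂ ^ 2) ∧
    (∀ x₁ x₂ : ℝ, 1 ≤ x₁ + x₂ → 1 ≤ x₁ ^ 2 + x₂ ^ 2 → 9 ≤ 9 * x₁ ^ 2 + x₂ ^ 2 →
      x₂ ≤ x₁ ^ 2 → x₁ ≤ x₂ ^ 2 → -50 ≤ x₁ → x₁ ≤ 50 → -50 ≤ x₂ → x₂ ≤ 50 →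
      (x₁ ^ 2 + x₂ ^ 2 = 2 ↔ (x₁, x₂) = ((1 : ℝ), (1 : ℝ)))) := by
  constructor
  · intro x₁ x₂ h1 h2 h3 h4 h5 _ _ _ _
    rcases aux4 x₁ x₂ h1 h4 h5 with ⟨e1, e2⟩ | h
    · nlinarith
    · linarith
  · intro x₁ x₂ h1 h2 h3 h4 h5 _ _ _ _
    constructor
    · intro heq
      rcases aux4 x₁ x₂ h1 h4 h5 with ⟨e1, e2⟩ | h
      · have : x₁ = 1 ∧ x₂ = 1 := by constructor <;> nlinarith
        simp [this.1, this.2]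
      · linarith
    · intro heq
      have h1' : x₁ = 1 := (Prod.mk.injEq _ _ _ _ ▸ heq : _ ∧ _).1
      have h2' : x₂ = 1 := (Prod.mk.injEq _ _ _ _ ▸ heq : _ ∧ _).2
      rw [h1', h2']; norm_num
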